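/- Let d ≥ 3 be an integer and let X be a metric space of bounded geometry. Then X is not amenable if and only if there exists a symmetric relation E ⊆ X × X with sup{d(x,y) | (x,y) ∈ E} < ∞ and E ∩ Δ_X = ∅ such that the simple graph on vertex set X with edge set {{x,y} | (x,y) ∈ E} is a d-regular forest, i.e. every vertex has degree exactly d and the graph contains no cycles. -/

import Mathlib

open Function Set

namespace Stmt0Aux

/-! ### Periodic points, orbits, representatives -/

variable {X : Type*}

def Per (p : X → X) : Set X := {x | ∃ n, 0 < n ∧ p^[n] x = x}

def Orb (p : X → X) (x : X) : Set X := {y | ∃ k, p^[k] x = y}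

lemma orb_self (p : X → X) (x : X) : x ∈ Orb p x := ⟨0, rfl⟩

lemma per_apply {p : X → X} {x : X} (hx : x ∈ Per p) : p x ∈ Per p := by
  obtain ⟨n, hn, hxn⟩ := hx
  exact ⟨n, hn, by rw [← Function.iterate_succ_apply, Function.iterate_succ_apply', hxn]⟩

lemma per_iterate {p : X → X} {x : X} (hx : x ∈ Per p) (k : ℕ) : p^[k] x ∈ Per p := by
  induction k with
  | zero => exact hx
  | succ k ih => rw [Function.iterate_succ_apply']; exact per_apply ih

lemma per_pow {p : X → X} {x : X} {n : ℕ} (h : p^[n] x = x) : ∀ k, p^[n*k] x = x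
  | 0 => rfl
  | (k+1) => by rw [Nat.mul_succ, Function.iterate_add_apply, h, per_pow h k]

lemma per_injOn (p : X → X) : Set.InjOn p (Per p) := by
  rintro z ⟨n, hn, hzn⟩ z' ⟨n', hn', hzn'⟩ h
  have h1 : p^[n*n'] z = z := per_pow hzn n'
  have h2 : p^[n*n'] z' = z' := by rw [mul_comm]; exact per_pow hzn' n
  obtain ⟨N, hN⟩ : ∃ N, n*n' = N+1 := ⟨n*n' - 1, by
    have := Nat.mul_pos hn hn'; omega⟩
  rw [hN, Function.iterate_succ_apply] at h1 h2
  rw [← h1, ← h2, h]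

lemma orb_eq {p : X → X} {x y : X} (hx : x ∈ Per p) (hy : y ∈ Orb p x) :
    Orb p y = Orb p x := by
  obtain ⟨k, hk⟩ := hy
  ext w
  constructor
  · rintro ⟨l, hl⟩
    exact ⟨l + k, by rw [Function.iterate_add_apply, hk, hl]⟩
  · rintro ⟨l, hl⟩
    obtain ⟨n, hn, hxn⟩ := hx
    refine ⟨l + (n*k - k), ?_⟩
    rw [← hk, ← Function.iterate_add_apply]
    have hnk : l + (n*k - k) + k = l + n*k := by
      have : k ≤ n * k := Nat.le_mul_of_pos_left k hn
      omega
    rw [hnk, Function.iterate_add_apply, per_pow hxn k, hl]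

open scoped Classical in
noncomputable def pick [ne : Nonempty X] (S : Set X) : X :=
  if h : S.Nonempty then h.choose else Classical.arbitrary X

noncomputable def rep (p : X → X) (x : X) : X := @pick X ⟨x⟩ (Orb p x)

lemma rep_mem (p : X → X) (x : X) : rep p x ∈ Orb p x := by
  have hne : (Orb p x).Nonempty := ⟨x, orb_self p x⟩
  unfold rep pick
  rw [dif_pos hne]
  exact hne.choose_spec

lemma rep_congr {p : X → X} {x y : X} (h : Orb p x = Orb p y) : rep p x = rep p y := by
  unfold rep; congr 1

lemma rep_per {p : X → X} {x : X} (hx : x ∈ Per p) : rep p x ∈ Per p := by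
  obtain ⟨k, hk⟩ := rep_mem p x
  rw [← hk]; exact per_iterate hx k

lemma rep_orb {p : X → X} {x y : X} (hx : x ∈ Per p) (hy : y ∈ Orb p x) :
    rep p y = rep p x := rep_congr (orb_eq hx hy)

def IsRep (p : X → X) (x₀ : X) : Prop := x₀ ∈ Per p ∧ rep p x₀ = x₀

lemma isRep_rep {p : X → X} {x : X} (hx : x ∈ Per p) : IsRep p (rep p x) :=
  ⟨rep_per hx, rep_orb hx (rep_mem p x)⟩


/-! ### Section: choice functions, rays, and the surgered map -/

variable (p : X → X)

open scoped Classical in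
noncomputable def sec (v : X) : X := if h : ∃ w, p w = v then h.choose else v

lemma sec_spec {v : X} (h : ∃ w, p w = v) : p (sec p v) = v := by
  rw [sec, dif_pos h]; exact h.choose_spec

open scoped Classical in
noncomputable def y1 (x₀ : X) : X :=
  if h : ((p ⁻¹' {x₀}) \ Per p).Nonempty then h.choose else x₀

lemma y1_spec {x₀ : X} (h : ((p ⁻¹' {x₀}) \ Per p).Nonempty) :
    p (y1 p x₀) = x₀ ∧ y1 p x₀ ∉ Per p := by
  rw [y1, dif_pos h]
  exact ⟨h.choose_spec.1, h.choose_spec.2⟩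

noncomputable def ray (x₀ : X) : ℕ → X
  | 0 => x₀
  | 1 => y1 p x₀
  | (n+2) => sec p (ray x₀ (n+1))

def nu (j : ℕ) : ℕ := if j % 3 = 1 then 2*j+7 else 2*j-5

def D2cond (x : X) : Prop :=
  ∃ q : X × ℕ, IsRep p q.1 ∧ 1 ≤ q.2 ∧ ray p q.1 (2*q.2) = x

open scoped Classical in
noncomputable def d2dat (x : X) : X × ℕ :=
  if h : D2cond p x then h.choose else (x, 0)

lemma d2dat_spec {x : X} (h : D2cond p x) :
    IsRep p (d2dat p x).1 ∧ 1 ≤ (d2dat p x).2 ∧ ray p (d2dat p x).1 (2*(d2dat p x).2) = x := by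
  rw [d2dat, dif_pos h]; exact h.choose_spec

open scoped Classical in
noncomputable def pS (x : X) : X :=
  if x ∈ Per p ∧ p x = rep p x then ray p (rep p x) 3
  else if D2cond p x then ray p (d2dat p x).1 (nu (d2dat p x).2)
  else p x

open scoped Classical in
noncomputable def zlast (x₀ : X) : X :=
  if h : ∃ z, z ∈ Per p ∧ p z = x₀ then h.choose else x₀

/-! ### nu arithmetic -/

lemma nu_inj {j k : ℕ} (hj : 1 ≤ j) (hk : 1 ≤ k) (h : nu j = nu k) : j = k := by
  unfold nu at h; split_ifs at h <;> omega

lemma nu_vals {j : ℕ} (hj : 1 ≤ j) :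
    (j = 2 ∧ nu j = 0) ∨ (j = 3 ∧ nu j = 1) ∨ (nu j % 2 = 1 ∧ 5 ≤ nu j ∧ nu j ≠ 2*j - 1) := by
  unfold nu; split_ifs with h <;> omega

lemma nu_two : nu 2 = 0 := by decide
lemma nu_three : nu 3 = 1 := by decide
lemma nu_one : nu 1 = 9 := by decide

lemma exists_nu {n : ℕ} (h : n % 2 = 1) (h5 : 5 ≤ n) : ∃ j, 1 ≤ j ∧ nu j = n := by
  rcases (by omega : n % 6 = 1 ∨ n % 6 = 3 ∨ n % 6 = 5) with h6 | h6 | h6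
  · obtain ⟨t, rfl⟩ : ∃ t, n = 6*t+7 := ⟨(n-7)/6, by omega⟩
    exact ⟨3*t+6, by omega, by unfold nu; rw [if_neg (by omega)]; omega⟩
  · obtain ⟨t, rfl⟩ : ∃ t, n = 6*t+9 := ⟨(n-9)/6, by omega⟩
    exact ⟨3*t+1, by omega, by unfold nu; rw [if_pos (by omega)]; omega⟩
  · obtain ⟨t, rfl⟩ : ∃ t, n = 6*t+5 := ⟨(n-5)/6, by omega⟩
    exact ⟨3*t+5, by omega, by unfold nu; rw [if_neg (by omega)]; omega⟩

/-! ### Ray lemmas (under the fiber hypothesis) -/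

section WithFib

variable {p} {m : ℕ}

lemma fib_fin (hm : 2 ≤ m) (hfib : ∀ v, (p ⁻¹' {v}).ncard = m) (v : X) :
    (p ⁻¹' {v}).Finite :=
  Set.finite_of_ncard_ne_zero (by rw [hfib]; omega)

lemma fib_surj (hm : 2 ≤ m) (hfib : ∀ v, (p ⁻¹' {v}).ncard = m) (v : X) :
    ∃ w, p w = v := by
  obtain ⟨w, hw⟩ := Set.nonempty_of_ncard_ne_zero (s := p ⁻¹' {v}) (by rw [hfib]; omega)
  exact ⟨w, hw⟩

lemma y1_ok (hm : 2 ≤ m) (hfib : ∀ v, (p ⁻¹' {v}).ncard = m) {x₀ : X}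
    (hx₀ : x₀ ∈ Per p) : p (y1 p x₀) = x₀ ∧ y1 p x₀ ∉ Per p := by
  apply y1_spec
  by_contra hne
  rw [Set.not_nonempty_iff_eq_empty, Set.diff_eq_empty] at hne
  have h2 : 1 < (p ⁻¹' {x₀}).ncard := by rw [hfib]; omega
  rw [Set.one_lt_ncard_iff (fib_fin hm hfib x₀)] at h2
  obtain ⟨a, b, ha, hb, hab⟩ := h2
  simp only [Set.mem_preimage, Set.mem_singleton_iff] at ha hb
  exact hab (per_injOn p (hne ha) (hne hb) (by rw [ha, hb]))

lemma ray_succ_p (hm : 2 ≤ m) (hfib : ∀ v, (p ⁻¹' {v}).ncard = m)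
    {x₀ : X} (hx₀ : IsRep p x₀) (n : ℕ) :
    p (ray p x₀ (n+1)) = ray p x₀ n := by
  cases n with
  | zero => exact (y1_ok hm hfib hx₀.1).1
  | succ k => exact sec_spec p (fib_surj hm hfib _)

lemma ray_add (hm : 2 ≤ m) (hfib : ∀ v, (p ⁻¹' {v}).ncard = m)
    {x₀ : X} (hx₀ : IsRep p x₀) (k n : ℕ) :
    p^[k] (ray p x₀ (k+n)) = ray p x₀ n := by
  induction k with
  | zero => simp
  | succ k ih =>
    have h1 : k + 1 + n = (k + n) + 1 := by omega
    rw [h1, Function.iterate_succ_apply, ray_succ_p hm hfib hx₀, ih]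

lemma ray_not_per (hm : 2 ≤ m) (hfib : ∀ v, (p ⁻¹' {v}).ncard = m)
    {x₀ : X} (hx₀ : IsRep p x₀) {n : ℕ} (hn : 1 ≤ n) :
    ray p x₀ n ∉ Per p := by
  induction n with
  | zero => omega
  | succ k ih =>
    cases k with
    | zero => exact (y1_ok hm hfib hx₀.1).2
    | succ l =>
      intro hper
      exact (ih (by omega)) (by
        have := per_apply hper
        rwa [ray_succ_p hm hfib hx₀ (l+1)] at this)

lemma ray_inj (hm : 2 ≤ m) (hfib : ∀ v, (p ⁻¹' {v}).ncard = m)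
    {x₀ x₀' : X} (hx₀ : IsRep p x₀) (hx₀' : IsRep p x₀') {n n' : ℕ}
    (h : ray p x₀ n = ray p x₀' n') : x₀ = x₀' ∧ n = n' := by
  have main : ∀ a b (y z : X), IsRep p y → IsRep p z → a ≤ b → ray p y a = ray p z b →
      y = z ∧ a = b := by
    intro a b y z hy hz hab heq
    have h1 : p^[a] (ray p y a) = y := by
      have := ray_add hm hfib hy a 0; simpa [ray] using this
    have h2 : p^[a] (ray p z b) = ray p z (b - a) := by
      have := ray_add hm hfib hz a (b - a)
      rwa [show a + (b - a) = b by omega] at this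
    rw [heq, h2] at h1
    rcases Nat.eq_or_lt_of_le hab with rfl | hlt
    · simp at h1; exact ⟨h1.symm, rfl⟩
    · exfalso
      exact ray_not_per hm hfib hz (n := b - a) (by omega) (h1 ▸ hy.1)
  rcases le_total n n' with hle | hle
  · exact main n n' x₀ x₀' hx₀ hx₀' hle h
  · obtain ⟨h1, h2⟩ := main n' n x₀' x₀ hx₀' hx₀ hle h.symm
    exact ⟨h1.symm, h2.symm⟩

lemma zlast_spec {x₀ : X} (hx₀ : x₀ ∈ Per p) :
    zlast p x₀ ∈ Per p ∧ p (zlast p x₀) = x₀ := by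
  have hex : ∃ z, z ∈ Per p ∧ p z = x₀ := by
    obtain ⟨n, hn, hxn⟩ := id hx₀
    refine ⟨p^[n-1] x₀, per_iterate hx₀ _, ?_⟩
    have h1 : p^[n] x₀ = p (p^[n-1] x₀) := by
      conv_lhs => rw [show n = (n-1)+1 by omega]
      exact Function.iterate_succ_apply' p (n-1) x₀
    rw [← h1, hxn]
  rw [zlast, dif_pos hex]
  exact hex.choose_spec

lemma rep_eq_of_per_map {x x₀ : X} (hx : x ∈ Per p) (hx₀ : IsRep p x₀)
    (hpx : p x = x₀) : rep p x = x₀ := by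
  have : x₀ ∈ Orb p x := ⟨1, by simpa using hpx⟩
  rw [show rep p x = rep p x₀ from (rep_orb hx this).symm ▸ rfl]
  · exact hx₀.2
  
lemma zlast_unique {x₀ z : X} (hx₀ : x₀ ∈ Per p) (hz : z ∈ Per p) (hpz : p z = x₀) :
    z = zlast p x₀ := by
  obtain ⟨h1, h2⟩ := zlast_spec (p := p) hx₀
  exact per_injOn p hz h1 (by rw [hpz, h2])

end WithFib

/-! ### Evaluation of pS -/

section Eval

variable {p : X → X} {m : ℕ}

lemma pS_cases (p : X → X) (x : X) :
    (x ∈ Per p ∧ p x = rep p x ∧ pS p x = ray p (rep p x) 3) ∨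
    (D2cond p x ∧ pS p x = ray p (d2dat p x).1 (nu (d2dat p x).2)) ∨
    (¬(x ∈ Per p ∧ p x = rep p x) ∧ ¬ D2cond p x ∧ pS p x = p x) := by
  by_cases h1 : x ∈ Per p ∧ p x = rep p x
  · exact Or.inl ⟨h1.1, h1.2, by unfold pS; rw [if_pos h1]⟩
  by_cases h2 : D2cond p x
  · exact Or.inr (Or.inl ⟨h2, by unfold pS; rw [if_neg h1, if_pos h2]⟩)
  · exact Or.inr (Or.inr ⟨h1, h2, by unfold pS; rw [if_neg h1, if_neg h2]⟩)

lemma pS_d1 {x : X} (h1 : x ∈ Per p) (h2 : p x = rep p x) :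
    pS p x = ray p (rep p x) 3 := by
  unfold pS; rw [if_pos ⟨h1, h2⟩]

lemma pS_none {x : X} (h1 : ¬(x ∈ Per p ∧ p x = rep p x)) (h2 : ¬ D2cond p x) :
    pS p x = p x := by
  unfold pS; rw [if_neg h1, if_neg h2]

lemma pS_even (hm : 2 ≤ m) (hfib : ∀ v, (p ⁻¹' {v}).ncard = m) {x₀ : X} {n : ℕ}
    (hx₀ : IsRep p x₀) (hn : 1 ≤ n) :
    pS p (ray p x₀ (2*n)) = ray p x₀ (nu n) := by
  have hd2 : D2cond p (ray p x₀ (2*n)) := ⟨(x₀, n), hx₀, hn, rfl⟩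
  have hnp : ray p x₀ (2*n) ∉ Per p := ray_not_per hm hfib hx₀ (by omega)
  unfold pS
  rw [if_neg (fun hc => hnp hc.1), if_pos hd2]
  obtain ⟨hr, h1, hray⟩ := d2dat_spec p hd2
  obtain ⟨he, hn2⟩ := ray_inj hm hfib hr hx₀ hray
  rw [he, show (d2dat p (ray p x₀ (2*n))).2 = n by omega]

lemma ray_p_pred (hm : 2 ≤ m) (hfib : ∀ v, (p ⁻¹' {v}).ncard = m) {x₀ : X} {n : ℕ}
    (hx₀ : IsRep p x₀) (hn : 1 ≤ n) :
    p (ray p x₀ n) = ray p x₀ (n-1) := by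
  have := ray_succ_p hm hfib hx₀ (n-1)
  rwa [show n - 1 + 1 = n by omega] at this

lemma pS_odd (hm : 2 ≤ m) (hfib : ∀ v, (p ⁻¹' {v}).ncard = m) {x₀ : X} {n : ℕ}
    (hx₀ : IsRep p x₀) (hodd : n % 2 = 1) :
    pS p (ray p x₀ n) = ray p x₀ (n-1) := by
  have hnp : ray p x₀ n ∉ Per p := ray_not_per hm hfib hx₀ (by omega)
  have hnd2 : ¬ D2cond p (ray p x₀ n) := by
    rintro ⟨⟨y, k⟩, hr, hk, hray⟩
    have := ray_inj hm hfib hr hx₀ hray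
    omega
  rw [pS_none (fun hc => hnp hc.1) hnd2]
  exact ray_p_pred hm hfib hx₀ (by omega)

/-! ### Fibers of pS -/

-- x in the generic fiber of `ray x₀ n` (n ≥ 1) is not redirected
lemma not_redirected (hm : 2 ≤ m) (hfib : ∀ v, (p ⁻¹' {v}).ncard = m) {x₀ x : X} {n : ℕ}
    (hx₀ : IsRep p x₀) (hn : 1 ≤ n) (hpx : p x = ray p x₀ n)
    (hne : x ≠ ray p x₀ (n+1)) :
    ¬(x ∈ Per p ∧ p x = rep p x) ∧ ¬ D2cond p x := by
  constructor
  · rintro ⟨hper, -⟩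
    exact ray_not_per hm hfib hx₀ hn (hpx ▸ per_apply hper)
  · rintro ⟨⟨y, k⟩, hr, hk, hray⟩
    have hpx' : p x = ray p y (2*k-1) := by
      rw [← hray]; exact ray_p_pred hm hfib hr (by omega)
    rw [hpx] at hpx'
    obtain ⟨rfl, hnk⟩ := ray_inj hm hfib hx₀ hr hpx'
    apply hne
    rw [← hray]
    congr 1
    omega

lemma fiber_rep (hm : 2 ≤ m) (hfib : ∀ v, (p ⁻¹' {v}).ncard = m) {x₀ : X}
    (hx₀ : IsRep p x₀) :
    pS p ⁻¹' {x₀} = insert (ray p x₀ 4) ((p ⁻¹' {x₀}) \ {zlast p x₀}) := by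
  ext x
  simp only [Set.mem_preimage, Set.mem_singleton_iff, Set.mem_insert_iff, Set.mem_diff]
  constructor
  · intro hx
    rcases pS_cases p x with ⟨hper, hpx, heq⟩ | ⟨hd2, heq⟩ | ⟨h1, h2, heq⟩
    · exfalso
      rw [hx] at heq
      have : x₀ = ray p x₀ 0 := rfl
      rw [this] at heq
      have := ray_inj hm hfib (isRep_rep hper) hx₀ heq.symm
      omega
    · obtain ⟨hr, hk1, hray⟩ := d2dat_spec p hd2
      rw [hx] at heq
      have heq' : ray p (d2dat p x).1 (nu (d2dat p x).2) = ray p x₀ 0 := heq.symm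
      obtain ⟨hy, hnuk⟩ := ray_inj hm hfib hr hx₀ heq'
      rcases nu_vals hk1 with ⟨hk2, -⟩ | ⟨hk3, hnu⟩ | ⟨hodd, h5, -⟩
      · left; rw [← hray, hy, hk2]
      · omega
      · omega
    · right
      rw [hx] at heq
      refine ⟨heq.symm, ?_⟩
      intro hzl
      obtain ⟨hzper, hpz⟩ := zlast_spec (p := p) hx₀.1
      apply h1
      rw [hzl]
      exact ⟨hzper, by rw [hpz, rep_eq_of_per_map hzper hx₀ hpz]⟩
  · rintro (rfl | ⟨hpx, hne⟩)
    · rw [pS_even hm hfib hx₀ (by omega : 1 ≤ 2), nu_two]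
      rfl
    · have h1 : ¬(x ∈ Per p ∧ p x = rep p x) := by
        rintro ⟨hper, hrep⟩
        have hrx : rep p x = x₀ := rep_eq_of_per_map hper hx₀ hpx
        exact hne (zlast_unique hx₀.1 hper hpx)
      have h2 : ¬ D2cond p x := by
        rintro ⟨⟨y, k⟩, hr, hk, hray⟩
        have hpx' : p x = ray p y (2*k-1) := by
          rw [← hray]; exact ray_p_pred hm hfib hr (by omega)
        rw [hpx] at hpx'
        have hx₀ray : (ray p x₀ 0 : X) = ray p y (2*k-1) := hpx'
        have := ray_inj hm hfib hx₀ hr hx₀ray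
        omega
      rw [pS_none h1 h2, hpx]

lemma fiber_odd (hm : 2 ≤ m) (hfib : ∀ v, (p ⁻¹' {v}).ncard = m) {x₀ : X} {n j : ℕ}
    (hx₀ : IsRep p x₀) (hodd : n % 2 = 1) (hn3 : n ≠ 3) (hj : 1 ≤ j) (hnuj : nu j = n) :
    pS p ⁻¹' {ray p x₀ n} = insert (ray p x₀ (2*j)) ((p ⁻¹' {ray p x₀ n}) \ {ray p x₀ (n+1)}) := by
  ext x
  simp only [Set.mem_preimage, Set.mem_singleton_iff, Set.mem_insert_iff, Set.mem_diff]
  constructor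
  · intro hx
    rcases pS_cases p x with ⟨hper, hpx, heq⟩ | ⟨hd2, heq⟩ | ⟨h1, h2, heq⟩
    · exfalso
      rw [hx] at heq
      have := ray_inj hm hfib (isRep_rep hper) hx₀ heq.symm
      omega
    · obtain ⟨hr, hk1, hray⟩ := d2dat_spec p hd2
      rw [hx] at heq
      obtain ⟨hy, hnuk⟩ := ray_inj hm hfib hr hx₀ heq.symm
      have : (d2dat p x).2 = j := nu_inj hk1 hj (by rw [hnuk, hnuj])
      left
      rw [← hray, hy, this]
    · right
      refine ⟨heq.symm ▸ hx, ?_⟩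
      intro hne
      apply h2
      refine ⟨(x₀, (n+1)/2), hx₀, by omega, ?_⟩
      rw [show 2*((n+1)/2) = n+1 by omega, ← hne]
  · rintro (rfl | ⟨hpx, hne⟩)
    · rw [pS_even hm hfib hx₀ hj, hnuj]
    · obtain ⟨h1, h2⟩ := not_redirected hm hfib hx₀ (by omega) hpx hne
      rw [pS_none h1 h2, hpx]

lemma fiber_three (hm : 2 ≤ m) (hfib : ∀ v, (p ⁻¹' {v}).ncard = m) {x₀ : X}
    (hx₀ : IsRep p x₀) :
    pS p ⁻¹' {ray p x₀ 3} = insert (zlast p x₀) ((p ⁻¹' {ray p x₀ 3}) \ {ray p x₀ 4}) := by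
  ext x
  simp only [Set.mem_preimage, Set.mem_singleton_iff, Set.mem_insert_iff, Set.mem_diff]
  constructor
  · intro hx
    rcases pS_cases p x with ⟨hper, hpx, heq⟩ | ⟨hd2, heq⟩ | ⟨h1, h2, heq⟩
    · rw [hx] at heq
      obtain ⟨hy, -⟩ := ray_inj hm hfib (isRep_rep hper) hx₀ heq.symm
      left
      have hpx₀ : p x = x₀ := by rw [hpx, hy]
      exact zlast_unique hx₀.1 hper hpx₀
    · exfalso
      obtain ⟨hr, hk1, hray⟩ := d2dat_spec p hd2
      rw [hx] at heq
      obtain ⟨hy, hnuk⟩ := ray_inj hm hfib hr hx₀ heq.symm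
      rcases nu_vals hk1 with ⟨-, h0⟩ | ⟨-, h1'⟩ | ⟨-, h5, -⟩ <;> omega
    · right
      refine ⟨heq.symm ▸ hx, ?_⟩
      intro hne
      exact h2 ⟨(x₀, 2), hx₀, by omega, hne.symm⟩
  · rintro (rfl | ⟨hpx, hne⟩)
    · obtain ⟨hzper, hpz⟩ := zlast_spec (p := p) hx₀.1
      have hrz : rep p (zlast p x₀) = x₀ := rep_eq_of_per_map hzper hx₀ hpz
      rw [pS_d1 hzper (by rw [hpz, hrz]), hrz]
    · obtain ⟨h1, h2⟩ := not_redirected hm hfib hx₀ (by omega) hpx hne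
      rw [pS_none h1 h2, hpx]

lemma fiber_even (hm : 2 ≤ m) (hfib : ∀ v, (p ⁻¹' {v}).ncard = m) {x₀ : X} {k : ℕ}
    (hx₀ : IsRep p x₀) (hk : 1 ≤ k) :
    pS p ⁻¹' {ray p x₀ (2*k)} = p ⁻¹' {ray p x₀ (2*k)} := by
  ext x
  simp only [Set.mem_preimage, Set.mem_singleton_iff]
  constructor
  · intro hx
    rcases pS_cases p x with ⟨hper, hpx, heq⟩ | ⟨hd2, heq⟩ | ⟨h1, h2, heq⟩
    · exfalso
      rw [hx] at heq
      have := ray_inj hm hfib (isRep_rep hper) hx₀ heq.symm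
      omega
    · exfalso
      obtain ⟨hr, hk1, hray⟩ := d2dat_spec p hd2
      rw [hx] at heq
      obtain ⟨hy, hnuk⟩ := ray_inj hm hfib hr hx₀ heq.symm
      rcases nu_vals hk1 with ⟨-, h0⟩ | ⟨-, h1'⟩ | ⟨hodd, -, -⟩ <;> omega
    · rw [← heq, hx]
  · intro hpx
    have h1 : ¬(x ∈ Per p ∧ p x = rep p x) := by
      rintro ⟨hper, -⟩
      exact ray_not_per hm hfib hx₀ (by omega) (hpx ▸ per_apply hper)
    have h2 : ¬ D2cond p x := by
      rintro ⟨⟨y, k'⟩, hr, hk', hray⟩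
      have hpx' : p x = ray p y (2*k'-1) := by
        rw [← hray]; exact ray_p_pred hm hfib hr (by omega)
      rw [hpx] at hpx'
      have := ray_inj hm hfib hx₀ hr hpx'
      omega
    rw [pS_none h1 h2, hpx]

lemma fiber_per_nonrep (hm : 2 ≤ m) (hfib : ∀ v, (p ⁻¹' {v}).ncard = m) {v : X}
    (hv : v ∈ Per p) (hvr : rep p v ≠ v) :
    pS p ⁻¹' {v} = p ⁻¹' {v} := by
  ext x
  simp only [Set.mem_preimage, Set.mem_singleton_iff]
  constructor
  · intro hx
    rcases pS_cases p x with ⟨hper, hpx, heq⟩ | ⟨hd2, heq⟩ | ⟨h1, h2, heq⟩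
    · exfalso
      rw [hx] at heq
      exact ray_not_per hm hfib (isRep_rep hper) (by omega) (heq ▸ hv)
    · exfalso
      obtain ⟨hr, hk1, hray⟩ := d2dat_spec p hd2
      rw [hx] at heq
      rcases nu_vals hk1 with ⟨hk2, h0⟩ | ⟨hk3, h1'⟩ | ⟨hodd, h5, -⟩
      · rw [h0] at heq
        exact hvr (by rw [heq]; exact hr.2)
      · exact ray_not_per hm hfib hr (by omega) (h1' ▸ heq ▸ hv)
      · exact ray_not_per hm hfib hr (by omega) (heq ▸ hv)
    · rw [← heq, hx]
  · intro hpx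
    have h1 : ¬(x ∈ Per p ∧ p x = rep p x) := by
      rintro ⟨hper, hrep⟩
      have hvorb : v ∈ Orb p x := ⟨1, by simpa using hpx⟩
      have : rep p v = rep p x := rep_orb hper hvorb
      rw [← hrep, hpx] at this
      exact hvr this
    have h2 : ¬ D2cond p x := by
      rintro ⟨⟨y, k'⟩, hr, hk', hray⟩
      have hpx' : p x = ray p y (2*k'-1) := by
        rw [← hray]; exact ray_p_pred hm hfib hr (by omega)
      rw [hpx] at hpx'
      exact ray_not_per hm hfib hr (by omega) (hpx' ▸ hv)
    rw [pS_none h1 h2, hpx]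

lemma fiber_off (hm : 2 ≤ m) (hfib : ∀ v, (p ⁻¹' {v}).ncard = m) {v : X}
    (hv : v ∉ Per p) (hoff : ∀ (y : X) (k : ℕ), IsRep p y → ray p y k ≠ v) :
    pS p ⁻¹' {v} = p ⁻¹' {v} := by
  ext x
  simp only [Set.mem_preimage, Set.mem_singleton_iff]
  constructor
  · intro hx
    rcases pS_cases p x with ⟨hper, hpx, heq⟩ | ⟨hd2, heq⟩ | ⟨h1, h2, heq⟩
    · exact absurd (heq ▸ hx : ray p (rep p x) 3 = v) (hoff _ _ (isRep_rep hper))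
    · obtain ⟨hr, hk1, hray⟩ := d2dat_spec p hd2
      exact absurd (heq ▸ hx) (hoff _ _ hr)
    · rw [← heq, hx]
  · intro hpx
    have h1 : ¬(x ∈ Per p ∧ p x = rep p x) := by
      rintro ⟨hper, -⟩
      exact hv (hpx ▸ per_apply hper)
    have h2 : ¬ D2cond p x := by
      rintro ⟨⟨y, k'⟩, hr, hk', hray⟩
      have hpx' : p x = ray p y (2*k'-1) := by
        rw [← hray]; exact ray_p_pred hm hfib hr (by omega)
      exact hoff y (2*k'-1) hr (by rw [← hpx', hpx])
    rw [pS_none h1 h2, hpx]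


lemma ncard_insert_diff {A : Set X} {a b : X} (hA : A.Finite) (hb : b ∈ A)
    (ha : a ∉ A \ {b}) : (insert a (A \ {b})).ncard = A.ncard := by
  rw [Set.ncard_insert_of_notMem ha (hA.diff (t := {b})),
    Set.ncard_diff_singleton_of_mem hb]
  have : 0 < A.ncard := (Set.ncard_pos hA).2 ⟨b, hb⟩
  omega

lemma pS_fib {p : X → X} {m : ℕ} (hm : 2 ≤ m) (hfib : ∀ v, (p ⁻¹' {v}).ncard = m)
    (v : X) : (pS p ⁻¹' {v}).ncard = m := by
  by_cases hray : ∃ (y : X) (k : ℕ), IsRep p y ∧ ray p y k = v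
  · obtain ⟨y, k, hy, rfl⟩ := hray
    have hfin : ∀ w : X, (p ⁻¹' {w}).Finite := fib_fin hm hfib
    rcases (by omega : k = 0 ∨ k = 3 ∨ (k % 2 = 1 ∧ k ≠ 3) ∨ (k % 2 = 0 ∧ 1 ≤ k)) with
      rfl | rfl | ⟨hodd, hk3⟩ | ⟨heven, hk1⟩
    · rw [show (ray p y 0 : X) = y from rfl, fiber_rep hm hfib hy]
      rw [ncard_insert_diff (hfin _) ?hb ?ha, hfib]
      case hb =>
        simp only [Set.mem_preimage, Set.mem_singleton_iff]
        exact (zlast_spec (p := p) hy.1).2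
      case ha =>
        rintro ⟨hmem, -⟩
        simp only [Set.mem_preimage, Set.mem_singleton_iff] at hmem
        rw [ray_p_pred hm hfib hy (by omega)] at hmem
        have hmem' : ray p y (4-1) = ray p y 0 := hmem
        have := ray_inj hm hfib hy hy hmem'
        omega
    · rw [fiber_three hm hfib hy]
      rw [ncard_insert_diff (hfin _) ?hb3 ?ha3, hfib]
      case hb3 =>
        simp only [Set.mem_preimage, Set.mem_singleton_iff]
        rw [ray_p_pred hm hfib hy (by omega)]
      case ha3 =>
        rintro ⟨hmem, -⟩
        simp only [Set.mem_preimage, Set.mem_singleton_iff] at hmem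
        rw [(zlast_spec (p := p) hy.1).2] at hmem
        have : (ray p y 0 : X) = ray p y 3 := hmem
        have := ray_inj hm hfib hy hy this
        omega
    · obtain ⟨j, hj1, hjv⟩ : ∃ j, 1 ≤ j ∧ nu j = k := by
        rcases (by omega : k = 1 ∨ 5 ≤ k) with rfl | h5
        · exact ⟨3, by omega, nu_three⟩
        · exact exists_nu hodd h5
      rw [fiber_odd hm hfib hy hodd hk3 hj1 hjv]
      rw [ncard_insert_diff (hfin _) ?hbo ?hao, hfib]
      case hbo =>
        simp only [Set.mem_preimage, Set.mem_singleton_iff]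
        have := ray_p_pred hm hfib hy (n := k+1) (by omega)
        rwa [show k + 1 - 1 = k by omega] at this
      case hao =>
        rintro ⟨hmem, -⟩
        simp only [Set.mem_preimage, Set.mem_singleton_iff] at hmem
        rw [ray_p_pred hm hfib hy (by omega : 1 ≤ 2*j)] at hmem
        obtain ⟨-, heq⟩ := ray_inj hm hfib hy hy hmem
        rcases nu_vals hj1 with ⟨-, h0⟩ | ⟨hj3, h1'⟩ | ⟨-, -, hne⟩ <;> omega
    · have h2 : k = 2*(k/2) := by omega
      rw [h2, fiber_even hm hfib hy (by omega), hfib]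
  · by_cases hper : v ∈ Per p
    · have hvr : rep p v ≠ v := fun h => hray ⟨v, 0, ⟨hper, h⟩, rfl⟩
      rw [fiber_per_nonrep hm hfib hper hvr, hfib]
    · rw [fiber_off hm hfib hper (fun y k hy hk => hray ⟨y, k, hy, hk⟩), hfib]

end Eval

/-! ### No periodic points for pS -/

lemma d2cond_not_per {p : X → X} {m : ℕ} (hm : 2 ≤ m)
    (hfib : ∀ v, (p ⁻¹' {v}).ncard = m) {x : X} (h : D2cond p x) : x ∉ Per p := by
  obtain ⟨⟨y, k⟩, hr, hk, hray⟩ := h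
  rw [← hray]
  exact ray_not_per hm hfib hr (by omega)

lemma iterate_mod {f : X → X} {x : X} {n : ℕ} (hx : f^[n] x = x) (hn : 0 < n)
    (M : ℕ) : f^[M] x = f^[M % n] x := by
  conv_lhs => rw [show M = M % n + n * (M / n) from (Nat.mod_add_div M n).symm]
  rw [Function.iterate_add_apply, per_pow hx]

lemma pS_no_periodic {p : X → X} {m : ℕ} (hm : 2 ≤ m)
    (hfib : ∀ v, (p ⁻¹' {v}).ncard = m) :
    ∀ (x : X) (n : ℕ), 0 < n → (pS p)^[n] x ≠ x := by
  classical
  intro x n hn hxn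
  set q := pS p with hq
  set O : Set X := Orb q x with hO
  have hOfin : O.Finite := by
    apply Set.Finite.subset (Set.finite_range (fun k : Fin n => q^[(k : ℕ)] x))
    rintro y ⟨k, rfl⟩
    exact ⟨⟨k % n, Nat.mod_lt _ hn⟩, (iterate_mod hxn hn k).symm⟩
  have hOcl : ∀ y ∈ O, q y ∈ O := by
    rintro y ⟨k, rfl⟩
    exact ⟨k+1, Function.iterate_succ_apply' q k x⟩
  have hOit : ∀ y ∈ O, ∀ k, q^[k] y ∈ O := by
    intro y hy k
    induction k with
    | zero => exact hy
    | succ k ih => rw [Function.iterate_succ_apply']; exact hOcl _ ih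
  have hxO : x ∈ O := ⟨0, rfl⟩
  -- Climbing lemma
  have hC1 : ∀ (y : X), IsRep p y → ∀ j, 1 ≤ j → j % 3 = 1 → ray p y (2*j) ∈ O → False := by
    intro y hy j hj hj3 hmem
    have hstep : ∀ i : ℕ, ray p y (2*(j + 3*i)) ∈ O := by
      intro i
      induction i with
      | zero => simpa using hmem
      | succ i ih =>
        have hJ1 : 1 ≤ j + 3*i := by omega
        have hJ3 : (j + 3*i) % 3 = 1 := by omega
        have hnuJ : nu (j+3*i) = 2*(j+3*i)+7 := by unfold nu; rw [if_pos hJ3]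
        have h1 : q (ray p y (2*(j+3*i))) = ray p y (2*(j+3*i)+7) := by
          rw [hq, pS_even hm hfib hy hJ1, hnuJ]
        have e1 : ray p y (2*(j+3*i)+7) ∈ O := h1 ▸ hOcl _ ih
        have h2 : q (ray p y (2*(j+3*i)+7)) = ray p y (2*(j+3*(i+1))) := by
          rw [hq, pS_odd hm hfib hy (by omega),
            show 2*(j+3*i)+7-1 = 2*(j+3*(i+1)) by omega]
        exact h2 ▸ hOcl _ e1
    have hinj : Function.Injective (fun i : ℕ => ray p y (2*(j + 3*i))) := by
      intro i i' hii
      have := ray_inj hm hfib hy hy hii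
      omega
    exact (Set.infinite_of_injective_forall_mem hinj hstep) hOfin
  -- gamma lemma: from a periodic point in O reach ray (rep v) 3
  have hGam : ∀ v : X, v ∈ Per p → v ∈ O → ray p (rep p v) 3 ∈ O := by
    intro v hv hvO
    have hex : ∃ t, p^[t] v ∈ Per p ∧ p (p^[t] v) = rep p (p^[t] v) := by
      have hyR : IsRep p (rep p v) := isRep_rep hv
      obtain ⟨hzper, hpz⟩ := zlast_spec (p := p) hyR.1
      have h1 : rep p v ∈ Orb p (zlast p (rep p v)) := ⟨1, by simpa using hpz⟩
      have h2 : Orb p (rep p v) = Orb p (zlast p (rep p v)) := orb_eq hzper h1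
      have h3 : Orb p (rep p v) = Orb p v := orb_eq hv (rep_mem p v)
      have h4 : zlast p (rep p v) ∈ Orb p v := by
        rw [← h3, h2]; exact orb_self _ _
      obtain ⟨t, ht⟩ := h4
      refine ⟨t, ht.symm ▸ hzper, ?_⟩
      rw [ht, hpz]
      have h5 : rep p (zlast p (rep p v)) = rep p (rep p v) := rep_congr h2.symm
      rw [h5, hyR.2]
    let t := Nat.find hex
    have ht := Nat.find_spec hex
    have hagree : ∀ s, s ≤ t → q^[s] v = p^[s] v := by
      intro s hs
      induction s with
      | zero => rfl
      | succ s ihs =>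
        rw [Function.iterate_succ_apply', Function.iterate_succ_apply',
          ihs (by omega)]
        have hwper : p^[s] v ∈ Per p := per_iterate hv s
        have h1 : ¬(p^[s] v ∈ Per p ∧ p (p^[s] v) = rep p (p^[s] v)) := by
          intro hc
          exact Nat.find_min hex (show s < t by omega) ⟨hwper, hc.2⟩
        have h2 : ¬ D2cond p (p^[s] v) := fun hd => (d2cond_not_per hm hfib hd) hwper
        rw [hq]
        exact pS_none h1 h2
    have hwO : p^[t] v ∈ O := hagree t le_rfl ▸ hOit v hvO t
    have hqt : q (p^[t] v) = ray p (rep p (p^[t] v)) 3 := pS_d1 ht.1 ht.2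
    have hrt : rep p (p^[t] v) = rep p v := rep_orb hv ⟨t, rfl⟩
    rw [hrt] at hqt
    exact hqt ▸ hOcl _ hwO
  -- descent lemma
  have hPhi : ∀ N (y : X), IsRep p y → ray p y N ∈ O → False := by
    intro N
    induction N using Nat.strong_induction_on with
    | _ N ih =>
      intro y hy hmem
      rcases (by omega : N = 0 ∨ N % 2 = 1 ∨
          (N = 2*(N/2) ∧ 1 ≤ N/2 ∧ (N/2) % 3 = 1) ∨
          (N = 2*(N/2) ∧ 1 ≤ N/2 ∧ (N/2) % 3 ≠ 1)) with
        rfl | hoddN | ⟨hNe, hk1, hk3⟩ | ⟨hNe, hk1, hk3⟩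
      · -- N = 0 : y itself is in O
        have hyO : y ∈ O := hmem
        have h3 : ray p y 3 ∈ O := by
          have := hGam y hy.1 hyO
          rwa [hy.2] at this
        have h2 : ray p y 2 ∈ O := by
          have he : q (ray p y 3) = ray p y 2 := by
            rw [hq, pS_odd hm hfib hy (by omega)]
          exact he ▸ hOcl _ h3
        exact hC1 y hy 1 (by omega) (by omega) (by
          rwa [show 2*1 = 2 by omega])
      · have he : q (ray p y N) = ray p y (N-1) := by
          rw [hq, pS_odd hm hfib hy hoddN]
        exact ih (N-1) (by omega) y hy (he ▸ hOcl _ hmem)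
      · exact hC1 y hy (N/2) hk1 hk3 (by rwa [← hNe])
      · have he : q (ray p y N) = ray p y (nu (N/2)) := by
          conv_lhs => rw [hNe]
          rw [hq, pS_even hm hfib hy hk1]
        have hlt : nu (N/2) < N := by
          unfold nu
          rw [if_neg hk3]
          omega
        exact ih (nu (N/2)) hlt y hy (he ▸ hOcl _ hmem)
  -- final case analysis
  by_cases hD : ∀ y ∈ O, ¬(y ∈ Per p ∧ p y = rep p y) ∧ ¬ D2cond p y
  · have hiter : ∀ k, q^[k] x = p^[k] x ∧ p^[k] x ∈ O := by
      intro k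
      induction k with
      | zero => exact ⟨rfl, hxO⟩
      | succ k ih =>
        obtain ⟨h1, h2⟩ := ih
        have h3 : q (p^[k] x) = p (p^[k] x) := by
          rw [hq]; exact pS_none (hD _ h2).1 (hD _ h2).2
        constructor
        · rw [Function.iterate_succ_apply', Function.iterate_succ_apply', h1, h3]
        · rw [Function.iterate_succ_apply']
          exact h3 ▸ hOcl _ h2
    have hxper : x ∈ Per p := ⟨n, hn, by rw [← (hiter n).1, hxn]⟩
    exact hPhi 3 (rep p x) (isRep_rep hxper) (hGam x hxper hxO)
  · obtain ⟨y, hyO, hcase⟩ : ∃ y ∈ O, (y ∈ Per p ∧ p y = rep p y) ∨ D2cond p y := by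
      by_contra hno
      push_neg at hno
      apply hD
      intro y hy
      have := hno y hy
      exact ⟨fun hA => this.1 hA.1 hA.2, this.2⟩
    rcases hcase with hA | hB
    · have hyper : y ∈ Per p := hA.1
      exact hPhi 3 (rep p y) (isRep_rep hyper) (hGam y hyper hyO)
    · obtain ⟨⟨z, k⟩, hr, hk, hray⟩ := hB
      exact hPhi (2*k) z hr (hray ▸ hyO)



lemma pS_displacement {p : X → X} {m : ℕ} (hm : 2 ≤ m)
    (hfib : ∀ v, (p ⁻¹' {v}).ncard = m) (x : X) :
    ∃ k l, k ≤ 9 ∧ l ≤ 9 ∧ p^[k] (pS p x) = p^[l] x := by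
  rcases pS_cases p x with ⟨hper, hpx, heq⟩ | ⟨hd2, heq⟩ | ⟨h1, h2, heq⟩
  · refine ⟨3, 1, by omega, by omega, ?_⟩
    rw [heq]
    have h3 : p^[3] (ray p (rep p x) 3) = ray p (rep p x) 0 := by
      have := ray_add hm hfib (isRep_rep hper) 3 0
      rwa [show 3 + 0 = 3 by rfl] at this
    rw [h3]
    show rep p x = p^[1] x
    simp [← hpx]
  · obtain ⟨hr, hk, hray⟩ := d2dat_spec p hd2
    set y := (d2dat p x).1 with hy
    set k := (d2dat p x).2 with hk2
    by_cases h3 : k % 3 = 1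
    · refine ⟨9, 2, le_rfl, by omega, ?_⟩
      rw [heq, show nu k = 2*k+7 by unfold nu; rw [if_pos h3]]
      have e1 : p^[9] (ray p y (9 + (2*k-2))) = ray p y (2*k-2) := ray_add hm hfib hr 9 _
      rw [show 2*k+7 = 9 + (2*k-2) by omega, e1]
      conv_rhs => rw [← hray, show 2*k = 2 + (2*k-2) by omega]
      exact (ray_add hm hfib hr 2 _).symm
    · rcases (by omega : k = 2 ∨ 3 ≤ k) with h2' | h2'
      · refine ⟨0, 4, by omega, by omega, ?_⟩
        rw [heq, h2', nu_two]
        conv_rhs => rw [← hray, h2', show 2*2 = 4 + 0 by rfl]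
        exact (ray_add hm hfib hr 4 0).symm
      · refine ⟨0, 5, by omega, by omega, ?_⟩
        rw [heq, show nu k = 2*k-5 by unfold nu; rw [if_neg h3]]
        conv_rhs => rw [← hray, show 2*k = 5 + (2*k-5) by omega]
        exact (ray_add hm hfib hr 5 _).symm
  · exact ⟨0, 1, by omega, by omega, by rw [heq]; simp⟩

theorem surgery {m : ℕ} (p : X → X) (hm : 2 ≤ m)
    (hfib : ∀ v, (p ⁻¹' {v}).ncard = m) :
    ∃ p' : X → X, (∀ v, (p' ⁻¹' {v}).ncard = m) ∧
      (∀ (x : X) (n : ℕ), 0 < n → p'^[n] x ≠ x) ∧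
      ∀ x, ∃ k l, k ≤ 9 ∧ l ≤ 9 ∧ p^[k] (p' x) = p^[l] x :=
  ⟨pS p, pS_fib hm hfib, pS_no_periodic hm hfib, pS_displacement hm hfib⟩



/-! ### Cantor–Schröder–Bernstein along a relation -/

theorem csb {Y : Type*} (f : X → Y) (g : Y → X) (hf : Function.Injective f)
    (hg : Function.Injective g) :
    ∃ h : X → Y, Function.Bijective h ∧ ∀ x, h x = f x ∨ g (h x) = x := by
  classical
  rcases isEmpty_or_nonempty Y with hY | hY
  · haveI hX : IsEmpty X := ⟨fun x => hY.false (f x)⟩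
    exact ⟨f, ⟨hf, fun y => (hY.false y).elim⟩, fun x => (hX.false x).elim⟩
  let C : ℕ → Set X := fun n => Nat.rec (Set.range g)ᶜ (fun _ S => g '' (f '' S)) n
  let S : Set X := ⋃ n, C n
  have hgf : ∀ x ∈ S, g (f x) ∈ S := by
    rintro x ⟨T, ⟨n, rfl⟩, hx⟩
    exact ⟨C (n+1), ⟨n+1, rfl⟩, ⟨f x, ⟨x, hx, rfl⟩, rfl⟩⟩
  have hrange : ∀ x, x ∉ S → x ∈ Set.range g := by
    intro x hx
    by_contra hr
    exact hx ⟨C 0, ⟨0, rfl⟩, hr⟩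
  let h : X → Y := fun x => if x ∈ S then f x else Function.invFun g x
  have hout : ∀ x, x ∉ S → g (h x) = x := by
    intro x hx
    simp only [h, if_neg hx]
    exact Function.invFun_eq (hrange x hx)
  have hin : ∀ x, x ∈ S → h x = f x := fun x hx => by simp only [h, if_pos hx]
  refine ⟨h, ⟨?_, ?_⟩, ?_⟩
  · intro a b hab
    by_cases ha : a ∈ S <;> by_cases hb : b ∈ S
    · rw [hin a ha, hin b hb] at hab; exact hf hab
    · exfalso
      rw [hin a ha] at hab
      have : g (f a) = b := by rw [hab]; exact hout b hb
      exact hb (this ▸ hgf a ha)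
    · exfalso
      rw [hin b hb] at hab
      have : g (f b) = a := by rw [← hab]; exact hout a ha
      exact ha (this ▸ hgf b hb)
    · have : g (h a) = g (h b) := by rw [hab]
      rw [hout a ha, hout b hb] at this
      exact this
  · intro y
    by_cases hy : g y ∈ S
    · obtain ⟨T, ⟨n, rfl⟩, hT⟩ := hy
      cases n with
      | zero =>
        have hT' : g y ∈ (Set.range g)ᶜ := hT
        exact absurd ⟨y, rfl⟩ hT'
      | succ n =>
        have hT' : g y ∈ g '' (f '' (C n)) := hT
        obtain ⟨z, ⟨x, hx, rfl⟩, hz⟩ := hT'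
        have hxy : y = f x := hg hz.symm
        exact ⟨x, by rw [hin x ⟨C n, ⟨n, rfl⟩, hx⟩, hxy]⟩
    · exact ⟨g y, hg (hout (g y) hy)⟩
  · intro x
    by_cases hx : x ∈ S
    · exact Or.inl (hin x hx)
    · exact Or.inr (hout x hx)

/-! ### Acyclicity of graphs coming from a function with no periodic points -/

lemma walk_support_get {G : SimpleGraph X} :
    ∀ {u v : X} (w : G.Walk u v) (i : ℕ) (hi : i < w.support.length),
      w.support.get ⟨i, hi⟩ = w.getVert i := by
  intro u v w
  induction w with
  | nil =>
    intro i hi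
    simp only [SimpleGraph.Walk.support_nil, List.length_singleton] at hi
    interval_cases i
    · rfl
  | cons h q ih =>
    intro i hi
    cases i with
    | zero => rfl
    | succ i =>
      simp only [SimpleGraph.Walk.support_cons] at hi ⊢
      rw [List.get_cons_succ]
      exact ih i _

lemma walk_tail_get {G : SimpleGraph X} {a b : X} (w : G.Walk a b) (i : ℕ)
    (hi : i < w.support.tail.length) :
    w.support.tail.get ⟨i, hi⟩ = w.getVert (i+1) := by
  cases w with
  | nil => simp at hi
  | cons h q =>
    simp only [SimpleGraph.Walk.support_cons, List.tail_cons] at hi ⊢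
    rw [walk_support_get q i hi]
    rfl

lemma acyclic_of_fun (G : SimpleGraph X) (f : X → X)
    (hadj : ∀ a b, G.Adj a b → b = f a ∨ a = f b)
    (hper : ∀ (x : X) (n : ℕ), 0 < n → f^[n] x ≠ x) : G.IsAcyclic := by
  classical
  intro v c hc
  set n := c.length with hn
  have hn3 : 3 ≤ n := hc.three_le_length
  have hgv : ∀ a b, a < n → b < n → c.getVert a = c.getVert b → a = b := by
    have hnd : c.support.tail.Nodup := hc.2
    have htl : c.support.tail.length = n := by
      have h4 := SimpleGraph.Walk.length_support c
      rw [SimpleGraph.Walk.support_eq_cons c, List.length_cons] at h4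
      omega
    have hinj := List.nodup_iff_injective_get.1 hnd
    have hinj' : ∀ a b, 1 ≤ a → a ≤ n → 1 ≤ b → b ≤ n →
        c.getVert a = c.getVert b → a = b := by
      intro a b ha1 han hb1 hbn hab
      have ha' : a - 1 < c.support.tail.length := by omega
      have hb' : b - 1 < c.support.tail.length := by omega
      have h8 := hinj (a₁ := ⟨a-1, ha'⟩) (a₂ := ⟨b-1, hb'⟩) (by
        rw [walk_tail_get c _ ha', walk_tail_get c _ hb',
          show a - 1 + 1 = a by omega, show b - 1 + 1 = b by omega]
        exact hab)
      have h9 : a - 1 = b - 1 := congrArg Fin.val h8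
      omega
    intro a b ha hb hab
    have h0 : c.getVert 0 = c.getVert n := by
      rw [SimpleGraph.Walk.getVert_zero, hn, SimpleGraph.Walk.getVert_length]
    rcases Nat.eq_zero_or_pos a with rfl | ha1
    · rcases Nat.eq_zero_or_pos b with rfl | hb1
      · rfl
      · exfalso
        rw [h0] at hab
        have := hinj' n b (by omega) (by omega) hb1 (by omega) hab
        omega
    · rcases Nat.eq_zero_or_pos b with rfl | hb1
      · exfalso
        rw [h0] at hab
        have := hinj' a n ha1 (by omega) (by omega) (by omega) hab
        omega
      · exact hinj' a b ha1 (by omega) hb1 (by omega) hab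
  set u : ℕ → X := fun i => c.getVert (i % n) with hu
  have humod : ∀ i, u (i + n) = u i := by
    intro i; simp only [hu, Nat.add_mod_right]
  have hadj' : ∀ i, G.Adj (u i) (u (i+1)) := by
    intro i
    show G.Adj (c.getVert (i % n)) (c.getVert ((i+1) % n))
    have h2 : i % n < n := Nat.mod_lt i (by omega)
    have hmod : (i+1) % n = (i % n + 1) % n := by
      conv_lhs => rw [Nat.add_mod]
      rw [Nat.mod_eq_of_lt (show 1 < n by omega)]
    rcases (by omega : i % n + 1 < n ∨ i % n + 1 = n) with hlt | heqn
    · rw [hmod, Nat.mod_eq_of_lt hlt]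
      exact c.adj_getVert_succ (by omega)
    · rw [hmod, heqn, Nat.mod_self]
      have h5 := c.adj_getVert_succ (i := n - 1) (by omega)
      rw [show n - 1 + 1 = n by omega] at h5
      rw [show i % n = n - 1 by omega]
      have h6 : c.getVert n = c.getVert 0 := by
        rw [SimpleGraph.Walk.getVert_zero, hn, SimpleGraph.Walk.getVert_length]
      rwa [h6] at h5
  have hdistinct : ∀ i, u i ≠ u (i + 2) := by
    intro i heq
    have heq' : c.getVert (i % n) = c.getVert ((i+2) % n) := heq
    have h2 : i % n < n := Nat.mod_lt i (by omega)
    have h7 : (i+2) % n < n := Nat.mod_lt _ (by omega)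
    have h6 := hgv (i % n) ((i+2) % n) h2 h7 heq'
    have hmod : (i+2) % n = (i % n + 2) % n := by
      conv_lhs => rw [Nat.add_mod]
      rw [Nat.mod_eq_of_lt (show 2 < n by omega)]
    have key : ∀ A, A < n → A ≠ (A + 2) % n := by
      intro A hA hcontra
      rcases lt_or_ge (A + 2) n with hlt | hge
      · rw [Nat.mod_eq_of_lt hlt] at hcontra
        omega
      · have hsub : A + 2 - n < n := by omega
        rw [Nat.mod_eq_sub_mod hge, Nat.mod_eq_of_lt hsub] at hcontra
        omega
    exact key (i % n) h2 (by rw [← hmod]; exact h6)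
  by_cases hfwd : ∀ i, u (i+1) = f (u i)
  · have hiter : ∀ k, f^[k] (u 0) = u k := by
      intro k
      induction k with
      | zero => rfl
      | succ k ih => rw [Function.iterate_succ_apply', ih, ← hfwd k]
    have hcontra : f^[n] (u 0) = u 0 := by
      rw [hiter n, show u n = u 0 from by simpa using humod 0]
    exact hper (u 0) n (by omega) hcontra
  · push_neg at hfwd
    obtain ⟨i₀, hi₀⟩ := hfwd
    have hbk : u i₀ = f (u (i₀+1)) := by
      rcases hadj _ _ (hadj' i₀) with h | h
      · exact absurd h hi₀
      · exact h
    by_cases hbwd : ∀ i, u i = f (u (i+1))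
    · have hiter : ∀ k, f^[k] (u k) = u 0 := by
        intro k
        induction k with
        | zero => rfl
        | succ k ih => rw [Function.iterate_succ_apply, ← hbwd k, ih]
      have hcontra : f^[n] (u 0) = u 0 := by
        have h7 := hiter n
        rwa [show u n = u 0 from by simpa using humod 0] at h7
      exact hper (u 0) n (by omega) hcontra
    · push_neg at hbwd
      obtain ⟨j₀, hj₀⟩ := hbwd
      have hjfwd : u (j₀+1) = f (u j₀) := by
        rcases hadj _ _ (hadj' j₀) with h | h
        · exact h
        · exact absurd h hj₀
      have hushift : ∀ i k, u (i + n * k) = u i := by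
        intro i k
        induction k with
        | zero => simp
        | succ k ih => rw [Nat.mul_succ, ← Nat.add_assoc, humod, ih]
      have hex : ∃ t, u (i₀ + 1 + t + 1) = f (u (i₀ + 1 + t)) := by
        refine ⟨j₀ + n * (i₀ + 1) - (i₀ + 1), ?_⟩
        have hge : i₀ + 1 ≤ j₀ + n * (i₀ + 1) := by
          have : 1 * (i₀ + 1) ≤ n * (i₀ + 1) := Nat.mul_le_mul_right _ (by omega)
          omega
        rw [show i₀ + 1 + (j₀ + n * (i₀+1) - (i₀+1)) = j₀ + n * (i₀+1) by omega,
          show j₀ + n * (i₀+1) + 1 = (j₀ + 1) + n * (i₀ + 1) by omega,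
          hushift (j₀+1) (i₀+1), hushift j₀ (i₀+1)]
        exact hjfwd
      have ht₀ := Nat.find_spec hex
      set t₀ := Nat.find hex with ht₀def
      set k := i₀ + t₀ with hk
      have hkbk : u k = f (u (k+1)) := by
        rcases Nat.eq_zero_or_pos t₀ with h0 | hpos
        · rw [hk, h0]; exact hbk
        · have hmin := Nat.find_min hex (show t₀ - 1 < t₀ by omega)
          rcases hadj _ _ (hadj' k) with h | h
          · exfalso
            apply hmin
            rw [show i₀ + 1 + (t₀ - 1) + 1 = k + 1 by omega,
              show i₀ + 1 + (t₀ - 1) = k by omega]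
            exact h
          · exact h
      have hkfwd : u (k+2) = f (u (k+1)) := by
        have h7 := ht₀
        rw [show i₀ + 1 + t₀ + 1 = k + 2 by omega,
          show i₀ + 1 + t₀ = k + 1 by omega] at h7
        exact h7
      exact hdistinct k (by rw [hkbk, hkfwd])

/-! ### Forests expand: counting lemmas -/

open Finset in
lemma exists_low_degree {G : SimpleGraph X} [DecidableEq X] [DecidableRel G.Adj]
    (hac : G.IsAcyclic) (F : Finset X) (hF : F.Nonempty) :
    ∃ v ∈ F, (F.filter (G.Adj v)).card ≤ 1 := by
  classical
  set P : Set ℕ := {ℓ : ℕ | ∃ (a b : X) (w : G.Walk a b), w.IsPath ∧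
    (∀ z ∈ w.support, z ∈ F) ∧ w.length = ℓ} with hP
  obtain ⟨v₀, hv₀⟩ := hF
  have h0 : 0 ∈ P := ⟨v₀, v₀, SimpleGraph.Walk.nil, SimpleGraph.Walk.IsPath.nil,
    by simp [hv₀], rfl⟩
  have hbdd : BddAbove P := by
    refine ⟨F.card, ?_⟩
    rintro ℓ ⟨a, b, w, hw, hsup, rfl⟩
    have hsub : w.support.toFinset ⊆ F := fun z hz => hsup z (List.mem_toFinset.1 hz)
    have hcard := Finset.card_le_card hsub
    rw [List.toFinset_card_of_nodup hw.support_nodup,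
      SimpleGraph.Walk.length_support] at hcard
    omega
  have hmem := Nat.sSup_mem ⟨0, h0⟩ hbdd
  obtain ⟨a, b, w, hw, hsup, hlen⟩ := hmem
  refine ⟨a, hsup a w.start_mem_support, ?_⟩
  -- every F-neighbor of a is in the support of w
  have claim1 : ∀ z, G.Adj a z → z ∈ F → z ∈ w.support := by
    intro z hz hzF
    by_contra hns
    have hpath : (SimpleGraph.Walk.cons hz.symm w).IsPath :=
      (SimpleGraph.Walk.cons_isPath_iff _ _).2 ⟨hw, hns⟩
    have hmem2 : w.length + 1 ∈ P := by
      refine ⟨z, b, SimpleGraph.Walk.cons hz.symm w, hpath, ?_, by simp⟩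
      intro y hy
      rw [SimpleGraph.Walk.support_cons] at hy
      rcases List.mem_cons.1 hy with rfl | hy
      · exact hzF
      · exact hsup y hy
    have := le_csSup hbdd hmem2
    omega
  have claim2 : ∀ z, G.Adj a z → z ∈ w.support → z = w.getVert 1 := by
    intro z hz hzs
    have hza : z ≠ a := fun h => G.irrefl (h ▸ hz)
    -- the edge s(a,z) must be an edge of w
    have hedge : s(a, z) ∈ w.edges := by
      by_contra hne
      have hrev : (w.takeUntil z hzs).reverse.IsPath :=
        (SimpleGraph.Walk.isPath_reverse_iff _).2 (hw.takeUntil hzs)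
      have hcyc := SimpleGraph.Path.cons_isCycle
        ⟨(w.takeUntil z hzs).reverse, hrev⟩ hz (by
          show s(a, z) ∉ (w.takeUntil z hzs).reverse.edges
          simp only [SimpleGraph.Walk.edges_reverse, List.mem_reverse]
          intro hcon
          exact hne (SimpleGraph.Walk.edges_takeUntil_subset w hzs hcon))
      exact hac _ hcyc
    cases w with
    | nil => simp at hedge
    | cons hadj q =>
      rw [SimpleGraph.Walk.edges_cons, List.mem_cons] at hedge
      rcases hedge with heq | hmem3
      · rw [Sym2.eq_iff] at heq
        rcases heq with ⟨-, rfl⟩ | ⟨rfl, rfl⟩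
        · simp [SimpleGraph.Walk.getVert_cons_succ]
        · exact absurd rfl hza
      · exfalso
        have : a ∈ q.support := SimpleGraph.Walk.fst_mem_support_of_mem_edges q hmem3
        exact ((SimpleGraph.Walk.cons_isPath_iff _ _).1 hw).2 this
  by_contra hcard
  push_neg at hcard
  obtain ⟨x, hx, y, hy, hxy⟩ := Finset.one_lt_card.1 hcard
  simp only [Finset.mem_filter] at hx hy
  have hx2 := claim2 x hx.2 (claim1 x hx.2 hx.1)
  have hy2 := claim2 y hy.2 (claim1 y hy.2 hy.1)
  exact hxy (hx2.trans hy2.symm)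

open Finset in
lemma forest_sum {G : SimpleGraph X} [DecidableEq X] [DecidableRel G.Adj]
    (hac : G.IsAcyclic) :
    ∀ (F : Finset X), F.Nonempty →
      (∑ v ∈ F, (F.filter (G.Adj v)).card) + 2 ≤ 2 * F.card := by
  intro F
  induction F using Finset.strongInduction with
  | _ F ih =>
    intro hne
    obtain ⟨v, hv, hdeg⟩ := exists_low_degree hac F hne
    set F' := F.erase v with hF'
    by_cases hsing : F' = ∅
    · have hFv : F = {v} := by
        apply Finset.eq_singleton_iff_unique_mem.2
        refine ⟨hv, fun y hy => ?_⟩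
        by_contra hyv
        exact (Finset.ne_empty_of_mem (Finset.mem_erase.2 ⟨hyv, hy⟩)) hsing
      subst hFv
      simp [Finset.filter_singleton, G.irrefl]
    · have hne' : F'.Nonempty := Finset.nonempty_iff_ne_empty.2 hsing
      have hss : F' ⊂ F := Finset.erase_ssubset hv
      have hIH := ih F' hss hne'
      -- filter over F vs F' for v itself
      have hfv : F.filter (G.Adj v) = F'.filter (G.Adj v) := by
        ext z
        simp only [Finset.mem_filter, hF', Finset.mem_erase]
        constructor
        · rintro ⟨hzF, hadj⟩
          exact ⟨⟨fun h => G.irrefl (h ▸ hadj), hzF⟩, hadj⟩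
        · rintro ⟨⟨-, hzF⟩, hadj⟩
          exact ⟨hzF, hadj⟩
      set c := (F'.filter (G.Adj v)).card with hc
      have hcle : c ≤ 1 := by rw [hc, ← hfv]; exact hdeg
      have hsplit : ∀ w ∈ F', (F.filter (G.Adj w)).card
          = (F'.filter (G.Adj w)).card + (if G.Adj w v then 1 else 0) := by
        intro w hw
        by_cases hwv : G.Adj w v
        · rw [if_pos hwv]
          have heq2 : F.filter (G.Adj w) = insert v (F'.filter (G.Adj w)) := by
            ext z
            simp only [Finset.mem_filter, Finset.mem_insert, hF', Finset.mem_erase]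
            constructor
            · rintro ⟨hzF, hadj⟩
              by_cases hzv : z = v
              · exact Or.inl hzv
              · exact Or.inr ⟨⟨hzv, hzF⟩, hadj⟩
            · rintro (rfl | ⟨⟨-, hzF⟩, hadj⟩)
              · exact ⟨hv, hwv⟩
              · exact ⟨hzF, hadj⟩
          rw [heq2, Finset.card_insert_of_notMem (by
            simp only [Finset.mem_filter, hF', Finset.mem_erase]
            rintro ⟨⟨hvv, -⟩, -⟩
            exact hvv rfl)]
        · rw [if_neg hwv, Nat.add_zero]
          congr 1
          ext z
          simp only [Finset.mem_filter, hF', Finset.mem_erase]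
          constructor
          · rintro ⟨hzF, hadj⟩
            refine ⟨⟨fun h => hwv (h ▸ hadj), hzF⟩, hadj⟩
          · rintro ⟨⟨-, hzF⟩, hadj⟩
            exact ⟨hzF, hadj⟩
      have h2 : ∑ w ∈ F', (F.filter (G.Adj w)).card
          = (∑ w ∈ F', (F'.filter (G.Adj w)).card) + c := by
        rw [Finset.sum_congr rfl hsplit, Finset.sum_add_distrib, Finset.sum_boole,
          Nat.cast_id]
        congr 1
        rw [hc]
        congr 1
        apply Finset.filter_congr
        intro z hz
        simp [G.adj_comm]
      have hsum : ∑ w ∈ F, (F.filter (G.Adj w)).card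
          = (∑ w ∈ F', (F'.filter (G.Adj w)).card) + 2 * c := by
        rw [← Finset.add_sum_erase F _ hv, ← hF', hfv, ← hc, h2]
        omega
      have hcard' : F'.card = F.card - 1 := by
        rw [hF', Finset.card_erase_of_mem hv]
      have hF1 : 1 ≤ F.card := Finset.card_pos.2 hne
      rw [hsum]
      omega

open Finset in
lemma forest_boundary {G : SimpleGraph X} [DecidableEq X] [DecidableRel G.Adj]
    (hac : G.IsAcyclic) {d : ℕ} (hd : 3 ≤ d)
    (hdeg : ∀ x : X, (G.neighborSet x).ncard = d)
    (F : Finset X) (hne : F.Nonempty) :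
    ∃ B : Finset X, Disjoint F B ∧ (∀ w ∈ B, ∃ v ∈ F, G.Adj v w) ∧
      F.card ≤ d * B.card := by
  classical
  have hnfin : ∀ x, (G.neighborSet x).Finite := fun x =>
    Set.finite_of_ncard_ne_zero (by rw [hdeg]; omega)
  set nb : X → Finset X := fun x => (hnfin x).toFinset with hnbdef
  have hnb : ∀ x z, z ∈ nb x ↔ G.Adj x z := by
    intro x z
    simp [hnbdef, Set.Finite.mem_toFinset, SimpleGraph.mem_neighborSet]
  have hnbcard : ∀ x, (nb x).card = d := by
    intro x
    rw [show (nb x).card = (G.neighborSet x).ncard from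
      (Set.ncard_eq_toFinset_card _ (hnfin x)).symm, hdeg]
  set B : Finset X := (F.biUnion nb) \ F with hBdef
  refine ⟨B, Finset.disjoint_sdiff, ?_, ?_⟩
  · intro w hw
    rw [hBdef, Finset.mem_sdiff, Finset.mem_biUnion] at hw
    obtain ⟨⟨v, hvF, hvw⟩, -⟩ := hw
    exact ⟨v, hvF, (hnb v w).1 hvw⟩
  · have key1 : ∀ v ∈ F, (F.filter (G.Adj v)).card + (B.filter (G.Adj v)).card = d := by
      intro v hv
      have hsplit : nb v = (F.filter (G.Adj v)) ∪ (B.filter (G.Adj v)) := by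
        ext z
        simp only [hnb, Finset.mem_union, Finset.mem_filter, hBdef, Finset.mem_sdiff,
          Finset.mem_biUnion]
        constructor
        · intro hadj
          by_cases hzF : z ∈ F
          · exact Or.inl ⟨hzF, hadj⟩
          · exact Or.inr ⟨⟨⟨v, hv, hadj⟩, hzF⟩, hadj⟩
        · rintro (⟨-, hadj⟩ | ⟨-, hadj⟩) <;> exact hadj
      have hdisj : Disjoint (F.filter (G.Adj v)) (B.filter (G.Adj v)) := by
        apply Finset.disjoint_filter_filter
        exact Finset.disjoint_sdiff
      rw [← hnbcard v, hsplit, Finset.card_union_of_disjoint hdisj]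
    have key2 : (∑ v ∈ F, (B.filter (G.Adj v)).card)
        = ∑ w ∈ B, (F.filter (fun v => G.Adj v w)).card := by
      calc ∑ v ∈ F, (B.filter (G.Adj v)).card
          = ∑ v ∈ F, ∑ w ∈ B, (if G.Adj v w then 1 else 0) := by
            refine Finset.sum_congr rfl fun v hv => ?_
            rw [Finset.sum_boole, Nat.cast_id]
        _ = ∑ w ∈ B, ∑ v ∈ F, (if G.Adj v w then 1 else 0) := Finset.sum_comm
        _ = ∑ w ∈ B, (F.filter (fun v => G.Adj v w)).card := by
            refine Finset.sum_congr rfl fun w hw => ?_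
            rw [Finset.sum_boole, Nat.cast_id]
    have key3 : ∀ w, (F.filter (fun v => G.Adj v w)).card ≤ d := by
      intro w
      rw [← hnbcard w]
      apply Finset.card_le_card
      intro v hv
      rw [hnb]
      exact ((Finset.mem_filter.1 hv).2).symm
    have hS2le : (∑ v ∈ F, (B.filter (G.Adj v)).card) ≤ d * B.card := by
      rw [key2]
      calc ∑ w ∈ B, (F.filter (fun v => G.Adj v w)).card
          ≤ ∑ _w ∈ B, d := Finset.sum_le_sum fun w _ => key3 w
        _ = B.card * d := by rw [Finset.sum_const, smul_eq_mul]
        _ = d * B.card := Nat.mul_comm _ _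
    have hsum1 : (∑ v ∈ F, (F.filter (G.Adj v)).card)
        + (∑ v ∈ F, (B.filter (G.Adj v)).card) = d * F.card := by
      rw [← Finset.sum_add_distrib, Finset.sum_congr rfl key1, Finset.sum_const,
        smul_eq_mul, Nat.mul_comm]
    have hfs := forest_sum hac F hne
    have hA2 : (d-2) * F.card + 2 * F.card = d * F.card := by
      have : d - 2 + 2 = d := by omega
      calc (d-2) * F.card + 2 * F.card = ((d-2) + 2) * F.card := by ring
        _ = d * F.card := by rw [this]
    have h5 : F.card ≤ (d-2) * F.card := Nat.le_mul_of_pos_left _ (by omega)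
    omega


/-! ### Expansion from non-amenability -/

section Metric

variable [MetricSpace X]

lemma nbd_finite (hbg : ∀ r : ℝ, 0 ≤ r → ∀ x : X, {y : X | dist x y ≤ r}.Finite)
    {F : Set X} (hF : F.Finite) {s : ℝ} (hs : 0 ≤ s) :
    {y : X | ∃ x ∈ F, dist x y ≤ s}.Finite := by
  have heq : {y : X | ∃ x ∈ F, dist x y ≤ s} = ⋃ x ∈ F, {y : X | dist x y ≤ s} := by
    ext y; simp
  rw [heq]
  exact hF.biUnion (fun x _ => hbg s hs x)

lemma subset_nbd {F : Set X} {s : ℝ} (hs : 0 ≤ s) :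
    F ⊆ {y : X | ∃ x ∈ F, dist x y ≤ s} :=
  fun x hx => ⟨x, hx, by simp [hs]⟩

lemma expansion_iter (hbg : ∀ r : ℝ, 0 ≤ r → ∀ x : X, {y : X | dist x y ≤ r}.Finite)
    {θ r : ℝ} (hθ : 1 < θ) (hr : 0 ≤ r)
    (hexp : ∀ F : Set X, F.Finite → F.Nonempty →
      θ * (F.ncard : ℝ) < ({y : X | ∃ x ∈ F, dist x y ≤ r}.ncard : ℝ)) :
    ∀ (k : ℕ) (F : Set X), F.Finite → F.Nonempty →
      θ^k * (F.ncard : ℝ) ≤ ({y : X | ∃ x ∈ F, dist x y ≤ (k:ℝ)*r}.ncard : ℝ) := by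
  intro k
  induction k with
  | zero =>
    intro F hF hne
    simp only [pow_zero, one_mul, Nat.cast_zero, zero_mul]
    have hsub : F ⊆ {y : X | ∃ x ∈ F, dist x y ≤ (0:ℝ)} := subset_nbd le_rfl
    have := Set.ncard_le_ncard hsub (nbd_finite hbg hF le_rfl)
    exact_mod_cast this
  | succ k ih =>
    intro F hF hne
    set N := {y : X | ∃ x ∈ F, dist x y ≤ (k:ℝ)*r} with hN
    have hNfin : N.Finite := nbd_finite hbg hF (by positivity)
    have hNne : N.Nonempty := hne.mono (subset_nbd (by positivity))
    have h1 := ih F hF hne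
    have h2 := hexp N hNfin hNne
    have h3 : {y : X | ∃ x ∈ N, dist x y ≤ r} ⊆
        {y : X | ∃ x ∈ F, dist x y ≤ ((k+1 : ℕ):ℝ)*r} := by
      rintro y ⟨x, ⟨z, hz, hzx⟩, hxy⟩
      refine ⟨z, hz, ?_⟩
      have := dist_triangle z x y
      push_cast
      push_cast at hzx
      nlinarith
    have h4 := Set.ncard_le_ncard h3 (nbd_finite hbg hF (by positivity))
    have h5 : θ^(k+1) * (F.ncard : ℝ) = θ * (θ^k * F.ncard) := by ring
    have hθ0 : (0:ℝ) < θ := by linarith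
    have h6 : (({y : X | ∃ x ∈ N, dist x y ≤ r}.ncard : ℕ) : ℝ)
        ≤ (({y : X | ∃ x ∈ F, dist x y ≤ ((k+1 : ℕ):ℝ)*r}.ncard : ℕ) : ℝ) := by
      exact_mod_cast h4
    have h7 : θ^(k+1) * (F.ncard : ℝ) < ({y : X | ∃ x ∈ N, dist x y ≤ r}.ncard : ℝ) := by
      rw [h5]
      calc θ * (θ^k * F.ncard) ≤ θ * N.ncard :=
            mul_le_mul_of_nonneg_left h1 (le_of_lt hθ0)
        _ < _ := h2
    linarith

end Metric


end Stmt0Aux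

theorem stmt_0 {X : Type*} [MetricSpace X] (d : ℕ) (hd : 3 ≤ d)
    (hbg : ∀ r : ℝ, 0 ≤ r → ∀ x : X, {y : X | dist x y ≤ r}.Finite) :
    (¬ ∀ θ : ℝ, 1 < θ → ∀ r : ℝ, 0 ≤ r → ∃ F : Set X, F.Finite ∧ F.Nonempty ∧
        ({y : X | ∃ x ∈ F, dist x y ≤ r}.ncard : ℝ) ≤ θ * (F.ncard : ℝ)) ↔
      ∃ E : Set (X × X),
        (∀ p : X × X, p ∈ E → (p.2, p.1) ∈ E) ∧
        (∃ r : ℝ, ∀ p : X × X, p ∈ E → dist p.1 p.2 ≤ r) ∧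
        (∀ x : X, (x, x) ∉ E) ∧
        (∀ x : X, ((SimpleGraph.fromRel (fun a b : X => (a, b) ∈ E)).neighborSet x).ncard = d) ∧
        (SimpleGraph.fromRel (fun a b : X => (a, b) ∈ E)).IsAcyclic := by
  classical
  open Stmt0Aux in
  constructor
  · -- Forward direction: non-amenable ⇒ d-regular forest
    intro hna
    push_neg at hna
    obtain ⟨θ, hθ, r, hr, hexp⟩ := hna
    set m := d - 1 with hmdef
    have hm : 2 ≤ m := by omega
    obtain ⟨k, hk⟩ : ∃ k : ℕ, (m : ℝ) < θ^k := pow_unbounded_of_one_lt _ hθ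
    set R := (k : ℝ) * r with hRdef
    have hR : 0 ≤ R := by positivity
    have hexp2 : ∀ F : Finset X, F.Nonempty →
        m * F.card ≤ {y : X | ∃ x ∈ (↑F : Set X), dist x y ≤ R}.ncard := by
      intro F hFne
      have h1 := expansion_iter hbg hθ hr hexp k ↑F F.finite_toSet
        (by exact_mod_cast hFne)
      rw [Set.ncard_coe_finset] at h1
      have h2 : (m:ℝ) * F.card ≤ θ^k * (F.card : ℝ) :=
        mul_le_mul_of_nonneg_right (le_of_lt hk) (by positivity)
      have h3 := le_trans h2 h1
      exact_mod_cast h3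
    -- Hall's theorem
    set t : X × Fin m → Finset X := fun q => (hbg R hR q.1).toFinset with htdef
    have hall : ∀ s : Finset (X × Fin m), s.card ≤ (s.biUnion t).card := by
      intro s
      rcases s.eq_empty_or_nonempty with rfl | hs
      · simp
      set F : Finset X := s.image Prod.fst with hFdef
      have hFne : F.Nonempty := hs.image _
      have h1 : s.card ≤ m * F.card := by
        have hsub : s ⊆ F ×ˢ (Finset.univ : Finset (Fin m)) := by
          intro q hq
          rw [Finset.mem_product]
          exact ⟨Finset.mem_image_of_mem _ hq, Finset.mem_univ _⟩
        calc s.card ≤ (F ×ˢ (Finset.univ : Finset (Fin m))).card :=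
              Finset.card_le_card hsub
          _ = F.card * m := by
              rw [Finset.card_product, Finset.card_univ, Fintype.card_fin]
          _ = m * F.card := Nat.mul_comm _ _
      have h2 : m * F.card ≤ (s.biUnion t).card := by
        have hNsub : {y : X | ∃ x ∈ (↑F : Set X), dist x y ≤ R} ⊆ ↑(s.biUnion t) := by
          rintro y ⟨x, hxF, hxy⟩
          rw [Finset.mem_coe, Finset.mem_image] at hxF
          obtain ⟨q, hqs, rfl⟩ := hxF
          rw [Finset.mem_coe, Finset.mem_biUnion]
          refine ⟨q, hqs, ?_⟩
          rw [htdef]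
          simp only [Set.Finite.mem_toFinset, Set.mem_setOf_eq]
          exact hxy
        have hle := Set.ncard_le_ncard hNsub (s.biUnion t).finite_toSet
        rw [Set.ncard_coe_finset] at hle
        exact le_trans (hexp2 F hFne) hle
      omega
    obtain ⟨g, hginj, hgmem⟩ :=
      (Finset.all_card_le_biUnion_card_iff_exists_injective t).1 hall
    have hgdist : ∀ q : X × Fin m, dist q.1 (g q) ≤ R := by
      intro q
      have := hgmem q
      rw [htdef] at this
      simpa only [Set.Finite.mem_toFinset, Set.mem_setOf_eq] using this
    -- CSB
    have hfinj : Function.Injective (fun x : X => (x, (⟨0, by omega⟩ : Fin m))) := by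
      intro a b hab
      simpa using congrArg Prod.fst hab
    obtain ⟨h, hbij, hprop⟩ := csb (fun x : X => (x, (⟨0, by omega⟩ : Fin m))) g hfinj hginj
    set p : X → X := fun x => (h x).1 with hpdef
    have hpdist : ∀ x, dist x (p x) ≤ R := by
      intro x
      rcases hprop x with he | he
      · have : p x = x := by rw [hpdef]; simp [he]
        rw [this]
        simpa using hR
      · have h1 := hgdist (h x)
        rw [he] at h1
        rw [dist_comm]
        exact h1
    have hpfib : ∀ v, (p ⁻¹' {v}).ncard = m := by
      intro v
      have hset : p ⁻¹' {v} = h ⁻¹' (Prod.mk v '' (Set.univ : Set (Fin m))) := by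
        ext x
        simp only [hpdef, Set.mem_preimage, Set.mem_singleton_iff, Set.image_univ,
          Set.mem_range]
        constructor
        · intro hx
          exact ⟨(h x).2, by rw [← hx]⟩
        · rintro ⟨i, hi⟩
          rw [← hi]
      rw [hset]
      have hmkinj : Function.Injective (Prod.mk v : Fin m → X × Fin m) := by
        intro a b hab
        simpa using hab
      calc (h ⁻¹' (Prod.mk v '' Set.univ)).ncard
          = (h '' (h ⁻¹' (Prod.mk v '' Set.univ))).ncard :=
            (Set.ncard_image_of_injective _ hbij.injective).symm
        _ = (Prod.mk v '' (Set.univ : Set (Fin m))).ncard := by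
            rw [Set.image_preimage_eq _ hbij.surjective]
        _ = (Set.univ : Set (Fin m)).ncard := Set.ncard_image_of_injective _ hmkinj
        _ = m := by rw [Set.ncard_univ, Nat.card_eq_fintype_card, Fintype.card_fin]
    -- Surgery
    obtain ⟨p', hfib', hper', hdisp'⟩ := surgery p hm hpfib
    have hstep : ∀ (y : X) (j : ℕ), dist y (p^[j] y) ≤ j * R := by
      intro y j
      induction j with
      | zero => simp
      | succ j ih =>
        rw [Function.iterate_succ_apply']
        calc dist y (p (p^[j] y)) ≤ dist y (p^[j] y) + dist (p^[j] y) (p (p^[j] y)) :=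
              dist_triangle _ _ _
          _ ≤ j * R + R := add_le_add ih (hpdist _)
          _ = ((j + 1 : ℕ) : ℝ) * R := by push_cast; ring
    have hp'dist : ∀ x, dist x (p' x) ≤ 18 * R := by
      intro x
      obtain ⟨kk, ll, hkk, hll, heq⟩ := hdisp' x
      calc dist x (p' x) ≤ dist x (p^[ll] x) + dist (p^[ll] x) (p' x) :=
            dist_triangle _ _ _
        _ = dist x (p^[ll] x) + dist (p' x) (p^[kk] (p' x)) := by
            rw [heq, dist_comm (p^[ll] x) (p' x)]
        _ ≤ ll * R + kk * R := add_le_add (hstep x ll) (hstep (p' x) kk)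
        _ ≤ 9 * R + 9 * R := by
            have h1 : (ll : ℝ) ≤ 9 := by exact_mod_cast hll
            have h2 : (kk : ℝ) ≤ 9 := by exact_mod_cast hkk
            exact add_le_add (mul_le_mul_of_nonneg_right h1 hR)
              (mul_le_mul_of_nonneg_right h2 hR)
        _ = 18 * R := by ring
    -- Define E
    refine ⟨{q : X × X | q.1 ≠ q.2 ∧ (q.2 = p' q.1 ∨ q.1 = p' q.2)}, ?_, ?_, ?_, ?_, ?_⟩
    · rintro ⟨a, b⟩ ⟨hne, hor⟩
      exact ⟨hne.symm, hor.symm⟩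
    · refine ⟨18 * R, ?_⟩
      rintro ⟨a, b⟩ ⟨hne, hor⟩
      dsimp only at hor ⊢
      rcases hor with rfl | rfl
      · exact hp'dist a
      · rw [dist_comm]
        exact hp'dist b
    · rintro x ⟨hne, -⟩
      exact hne rfl
    · intro x
      have hadjE : ∀ y, (SimpleGraph.fromRel
          (fun a b : X => (a, b) ∈ {q : X × X | q.1 ≠ q.2 ∧ (q.2 = p' q.1 ∨ q.1 = p' q.2)})).Adj x y
          ↔ x ≠ y ∧ (y = p' x ∨ x = p' y) := by
        intro y
        rw [SimpleGraph.fromRel_adj]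
        constructor
        · rintro ⟨hne, ⟨-, h⟩ | ⟨-, h⟩⟩
          · exact ⟨hne, h⟩
          · exact ⟨hne, h.symm⟩
        · rintro ⟨hne, hor⟩
          exact ⟨hne, Or.inl ⟨hne, hor⟩⟩
      have hset : (SimpleGraph.fromRel
          (fun a b : X => (a, b) ∈ {q : X × X | q.1 ≠ q.2 ∧ (q.2 = p' q.1 ∨ q.1 = p' q.2)})).neighborSet x
          = insert (p' x) (p' ⁻¹' {x}) := by
        ext y
        rw [SimpleGraph.mem_neighborSet, hadjE y]
        simp only [Set.mem_insert_iff, Set.mem_preimage, Set.mem_singleton_iff]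
        constructor
        · rintro ⟨hne, h | h⟩
          · exact Or.inl h
          · exact Or.inr h.symm
        · rintro (rfl | h)
          · refine ⟨?_, Or.inl rfl⟩
            intro hxx
            exact hper' x 1 (by omega) (by simpa using hxx.symm)
          · refine ⟨?_, Or.inr h.symm⟩
            intro hxy
            subst hxy
            exact hper' x 1 (by omega) (by simpa using h)
      rw [hset]
      have hfibfin : (p' ⁻¹' {x}).Finite :=
        Set.finite_of_ncard_ne_zero (by rw [hfib']; omega)
      have hnotmem : p' x ∉ p' ⁻¹' {x} := by
        intro hmem
        rw [Set.mem_preimage, Set.mem_singleton_iff] at hmem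
        exact hper' x 2 (by omega) (by
          rw [show (2:ℕ) = 1 + 1 by rfl, Function.iterate_add_apply]
          simpa using hmem)
      rw [Set.ncard_insert_of_notMem hnotmem hfibfin, hfib']
      omega
    · apply acyclic_of_fun _ p'
      · intro a b hab
        rw [SimpleGraph.fromRel_adj] at hab
        rcases hab with ⟨-, ⟨-, h⟩ | ⟨-, h⟩⟩
        · exact h
        · exact h.symm
      · exact hper'
  · -- Backward direction: d-regular forest ⇒ non-amenable
    rintro ⟨E, hsym, ⟨R₀, hbound⟩, hirr, hdeg, hacyc⟩ hamen
    set G := SimpleGraph.fromRel (fun a b : X => (a, b) ∈ E) with hGdef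
    set r : ℝ := max R₀ 0 with hrdef
    have hr0 : (0:ℝ) ≤ r := le_max_right _ _
    have hd0 : (0:ℝ) < d := by
      have : (3:ℝ) ≤ d := by exact_mod_cast hd
      linarith
    have hθ : (1:ℝ) < 1 + 1/(2*d) := by
      have : (0:ℝ) < 1/(2*d) := by positivity
      linarith
    obtain ⟨F, hFfin, hFne, hFle⟩ := hamen (1 + 1/(2*(d:ℝ))) hθ r hr0
    set Fs := hFfin.toFinset with hFsdef
    have hFsne : Fs.Nonempty := by
      obtain ⟨x, hx⟩ := hFne
      exact ⟨x, (Set.Finite.mem_toFinset _).2 hx⟩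
    obtain ⟨B, hdisj, hBadj, hcount⟩ := forest_boundary hacyc hd hdeg Fs hFsne
    set N := {y : X | ∃ x ∈ F, dist x y ≤ r} with hNdef
    have hNfin : N.Finite := nbd_finite hbg hFfin hr0
    have hsubN : (↑Fs ∪ ↑B : Set X) ⊆ N := by
      intro y hy
      rcases hy with hy | hy
      · rw [Finset.mem_coe, Set.Finite.mem_toFinset] at hy
        exact subset_nbd hr0 hy
      · rw [Finset.mem_coe] at hy
        obtain ⟨v, hvF, hadj⟩ := hBadj y hy
        rw [hGdef, SimpleGraph.fromRel_adj] at hadj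
        have hdist : dist v y ≤ R₀ := by
          rcases hadj.2 with hE | hE
          · exact hbound (v, y) hE
          · rw [dist_comm]
            exact hbound (y, v) hE
        refine ⟨v, ?_, le_trans hdist (le_max_left _ _)⟩
        rw [hFsdef, Set.Finite.mem_toFinset] at hvF
        exact hvF
    have hNcard : Fs.card + B.card ≤ N.ncard := by
      have h1 : (↑Fs ∪ ↑B : Set X).ncard = Fs.card + B.card := by
        rw [Set.ncard_union_eq (by exact_mod_cast hdisj)
          Fs.finite_toSet B.finite_toSet, Set.ncard_coe_finset, Set.ncard_coe_finset]
      rw [← h1]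
      exact Set.ncard_le_ncard hsubN hNfin
    have hFcard : F.ncard = Fs.card := Set.ncard_eq_toFinset_card _ hFfin
    have hF1 : 1 ≤ Fs.card := Finset.card_pos.2 hFsne
    have hreal : (2*(d:ℝ)) * N.ncard ≤ 2*d*Fs.card + Fs.card := by
      have h2 := mul_le_mul_of_nonneg_left hFle
        (show (0:ℝ) ≤ 2*d by linarith)
      rw [hFcard] at h2
      calc (2*(d:ℝ)) * N.ncard ≤ 2*d*((1 + 1/(2*d)) * Fs.card) := h2
        _ = 2*d*Fs.card + Fs.card := by
            field_simp
    have hnat : 2*(d*N.ncard) ≤ 2*(d*Fs.card) + Fs.card := by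
      have : ((2*(d*N.ncard) : ℕ) : ℝ) ≤ ((2*(d*Fs.card) + Fs.card : ℕ) : ℝ) := by
        push_cast
        calc (2:ℝ)*(d*N.ncard) = 2*d*N.ncard := by ring
          _ ≤ 2*d*Fs.card + Fs.card := hreal
          _ = 2*(d*Fs.card) + Fs.card := by ring
      exact_mod_cast this
    have s1 : 2*(d*Fs.card) + 2*(d*B.card) ≤ 2*(d*N.ncard) := by
      calc 2*(d*Fs.card) + 2*(d*B.card) = 2*(d*(Fs.card + B.card)) := by ring
        _ ≤ 2*(d*N.ncard) := by
            have := Nat.mul_le_mul_left d hNcard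
            omega
    have h5 : Fs.card ≤ d * B.card := hcount
    linarith [s1, hnat, h5, hF1]
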